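/- (Linear convergence of RACER.) Suppose 0 ≤ c(z,a) ≤ M and 0 ≤ w2(z) ≤ K for all z ∈ Z, a ∈ {0,1}, with M, K > 0. Let λ* be the unique minimizer of the dual function d over [0, ∞), let π* = π_{λ*}, fix λ_0 ≥ 0, and define the primal–dual iterates by λ_{t+1} = max(0, λ_t + η ( ∑_z ρ(z) ∑_a π_{λ_t}(a|z) w2(z) c(z,a) − C − β λ_t )) with step size η = 2β/(M²K² + 2β²), and π_t = π_{λ_t}. Then for every t ≥ 0, ∑_z ρ(z) · KL( π_t(·|z) ‖ π*(·|z) ) ≤ (M²K²/(2β²)) · ( M²K²/(M²K² + 2β²) )^{2t} · (λ_0 − λ*)². -/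

import Mathlib

open Finset

/-- `q_λ(z,a) = w1(z) r(z,a) − λ w2(z) c(z,a)`. -/
noncomputable def qfun {Z : Type*} (r c : Z → Bool → ℝ) (w1 w2 : Z → ℝ)
    (lam : ℝ) (z : Z) (a : Bool) : ℝ :=
  w1 z * r z a - lam * (w2 z * c z a)

/-- Partition function `Q(z,λ) = ∑_a exp(q_λ(z,a)/β)`. -/
noncomputable def Qpart {Z : Type*} (r c : Z → Bool → ℝ) (w1 w2 : Z → ℝ)
    (β lam : ℝ) (z : Z) : ℝ :=
  ∑ a, Real.exp (qfun r c w1 w2 lam z a / β)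

/-- Gibbs policy `π_λ(a|z) = exp(q_λ(z,a)/β) / Q(z,λ)`. -/
noncomputable def gibbs {Z : Type*} (r c : Z → Bool → ℝ) (w1 w2 : Z → ℝ)
    (β lam : ℝ) (z : Z) (a : Bool) : ℝ :=
  Real.exp (qfun r c w1 w2 lam z a / β) / Qpart r c w1 w2 β lam z

/-- The dual function `d(λ) = β ∑_z ρ(z) log Q(z,λ) + λ C + (β/2) λ²`. -/
noncomputable def dualFun {Z : Type*} [Fintype Z] (ρ : Z → ℝ)
    (r c : Z → Bool → ℝ) (w1 w2 : Z → ℝ) (β C lam : ℝ) : ℝ :=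
  β * ∑ z, ρ z * Real.log (Qpart r c w1 w2 β lam z) + lam * C + β * lam ^ 2 / 2

/-- KL divergence between two pmfs on `{0,1}` (with positive second argument):
`KL(p‖q) = ∑_a p(a) log(p(a)/q(a))`. -/
noncomputable def klBool (p q : Bool → ℝ) : ℝ :=
  ∑ a, p a * Real.log (p a / q a)


open Set


/-- Lipschitz bound from a derivative bound, via MVT. -/
lemma abs_sub_le_of_derivBound {f f' : ℝ → ℝ} (hf : ∀ x, HasDerivAt f (f' x) x)
    {S : ℝ} (hb : ∀ x, |f' x| ≤ S) (a b : ℝ) :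
    |f b - f a| ≤ S * |b - a| := by
  have key : ∀ u v : ℝ, u < v → |f v - f u| ≤ S * |v - u| := by
    intro u v huv
    obtain ⟨ξ, _, hξ⟩ := exists_hasDerivAt_eq_slope f f' huv
      (fun x _ => (hf x).continuousAt.continuousWithinAt) (fun x _ => hf x)
    have hne : v - u ≠ 0 := by linarith
    have : f v - f u = f' ξ * (v - u) := by
      field_simp at hξ; linarith [hξ]
    rw [this, abs_mul]
    gcongr
    exact hb ξ
  rcases lt_trichotomy a b with h | h | h
  · exact key a b h
  · simp [h]
  · rw [abs_sub_comm (f b), abs_sub_comm b]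
    exact key b a h

/-- Quadratic upper bound (descent lemma) from Lipschitz gradient, in 1D. -/
lemma quad_upper {f f' : ℝ → ℝ} (hf : ∀ x, HasDerivAt f (f' x) x)
    {S : ℝ} (hS : 0 ≤ S) (hlip : ∀ u v : ℝ, |f' v - f' u| ≤ S * |v - u|)
    (a b : ℝ) :
    f b - f a - f' a * (b - a) ≤ S / 2 * (b - a) ^ 2 := by
  set d := b - a with hd
  set ψ : ℝ → ℝ := fun t => f (a + t * d) - f' a * (t * d) - S / 2 * d ^ 2 * t ^ 2 with hψdef
  have hline : ∀ t : ℝ, HasDerivAt (fun t : ℝ => a + t * d) d t := by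
    intro t
    simpa using ((hasDerivAt_id t).mul_const d).const_add a
  have hψ : ∀ t : ℝ, HasDerivAt ψ (f' (a + t * d) * d - f' a * d - S * d ^ 2 * t) t := by
    intro t
    have h1 : HasDerivAt (fun t : ℝ => f (a + t * d)) (f' (a + t * d) * d) t :=
      (hf (a + t * d)).comp t (hline t)
    have h2 : HasDerivAt (fun t : ℝ => f' a * (t * d)) (f' a * d) t := by
      simpa [mul_assoc] using ((hasDerivAt_id t).mul_const d).const_mul (f' a)
    have h3 : HasDerivAt (fun t : ℝ => S / 2 * d ^ 2 * t ^ 2) (S * d ^ 2 * t) t := by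
      have := (hasDerivAt_pow 2 t).const_mul (S / 2 * d ^ 2)
      refine this.congr_deriv ?_
      ring
    exact (h1.sub h2).sub h3
  have hanti : AntitoneOn ψ (Icc (0:ℝ) 1) := by
    apply antitoneOn_of_deriv_nonpos (convex_Icc 0 1)
    · exact fun x _ => ((hψ x).continuousAt).continuousWithinAt
    · intro x hx
      exact ((hψ x).differentiableAt).differentiableWithinAt
    · intro x hx
      rw [interior_Icc] at hx
      rw [(hψ x).deriv]
      have hlb : |f' (a + x * d) - f' a| ≤ S * (x * |d|) := by
        have := hlip a (a + x * d)
        simpa [abs_mul, abs_of_pos hx.1, mul_assoc] using this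
      have h1 : (f' (a + x * d) - f' a) * d ≤ S * (x * |d|) * |d| := by
        calc (f' (a + x * d) - f' a) * d ≤ |(f' (a + x * d) - f' a) * d| := le_abs_self _
          _ = |f' (a + x * d) - f' a| * |d| := abs_mul _ _
          _ ≤ S * (x * |d|) * |d| := by
              gcongr
      have h2 : |d| * |d| = d ^ 2 := by rw [← sq_abs]; ring
      have h3 : S * (x * |d|) * |d| = S * d ^ 2 * x := by rw [← h2]; ring
      linarith
  have h01 : ψ 1 ≤ ψ 0 := hanti (by simp) (by norm_num) (by norm_num)
  simp only [hψdef] at h01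
  norm_num at h01
  have : a + d = b := by rw [hd]; ring
  rw [this] at h01
  linarith



section racer_aux
variable {Z : Type*} (r c : Z → Bool → ℝ) (w1 w2 : Z → ℝ) (β : ℝ)

/-- first moment numerator -/
noncomputable def E1f (lam : ℝ) (z : Z) : ℝ :=
  ∑ a, Real.exp (qfun r c w1 w2 lam z a / β) * (w2 z * c z a)

/-- second moment numerator -/
noncomputable def E2f (lam : ℝ) (z : Z) : ℝ :=
  ∑ a, Real.exp (qfun r c w1 w2 lam z a / β) * (w2 z * c z a) ^ 2

lemma Qpart_pos (lam : ℝ) (z : Z) : 0 < Qpart r c w1 w2 β lam z :=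
  Finset.sum_pos (fun a _ => Real.exp_pos _) univ_nonempty

lemma hasDerivAt_expq (hβ : β ≠ 0) (lam : ℝ) (z : Z) (a : Bool) :
    HasDerivAt (fun l => Real.exp (qfun r c w1 w2 l z a / β))
      (Real.exp (qfun r c w1 w2 lam z a / β) * (-(w2 z * c z a) / β)) lam := by
  have h1 : HasDerivAt (fun l : ℝ => qfun r c w1 w2 l z a / β)
      (-(w2 z * c z a) / β) lam := by
    have : HasDerivAt (fun l : ℝ => w1 z * r z a - l * (w2 z * c z a))
        (-(w2 z * c z a)) lam := by
      simpa using ((hasDerivAt_id lam).mul_const (w2 z * c z a)).const_sub (w1 z * r z a)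
    simpa [qfun] using this.div_const β
  simpa using h1.exp

lemma hasDerivAt_Qpart (hβ : β ≠ 0) (lam : ℝ) (z : Z) :
    HasDerivAt (fun l => Qpart r c w1 w2 β l z) (-E1f r c w1 w2 β lam z / β) lam := by
  have h := HasDerivAt.sum (fun a (_ : a ∈ (univ : Finset Bool)) =>
    hasDerivAt_expq r c w1 w2 β hβ lam z a)
  have he : (∑ a, Real.exp (qfun r c w1 w2 lam z a / β) * (-(w2 z * c z a) / β))
      = -E1f r c w1 w2 β lam z / β := by
    rw [E1f, neg_div, Finset.sum_div, ← Finset.sum_neg_distrib]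
    exact Finset.sum_congr rfl fun a _ => by ring
  rw [he] at h
  exact h

lemma hasDerivAt_E1f (hβ : β ≠ 0) (lam : ℝ) (z : Z) :
    HasDerivAt (fun l => E1f r c w1 w2 β l z) (-E2f r c w1 w2 β lam z / β) lam := by
  have h := HasDerivAt.sum (fun a (_ : a ∈ (univ : Finset Bool)) =>
    (hasDerivAt_expq r c w1 w2 β hβ lam z a).mul_const (w2 z * c z a))
  have he : (∑ a, Real.exp (qfun r c w1 w2 lam z a / β) * (-(w2 z * c z a) / β) * (w2 z * c z a))
      = -E2f r c w1 w2 β lam z / β := by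
    rw [E2f, neg_div, Finset.sum_div, ← Finset.sum_neg_distrib]
    exact Finset.sum_congr rfl fun a _ => by ring
  rw [he] at h
  exact h

/-- `∑_a π(a|z) v(z,a) = E1/Q`. -/
lemma gibbs_mean_eq (lam : ℝ) (z : Z) :
    (∑ a, gibbs r c w1 w2 β lam z a * (w2 z * c z a))
      = E1f r c w1 w2 β lam z / Qpart r c w1 w2 β lam z := by
  rw [E1f, Finset.sum_div]
  exact Finset.sum_congr rfl fun a _ => by rw [gibbs]; ring

lemma gibbs_sum_one (lam : ℝ) (z : Z) : (∑ a, gibbs r c w1 w2 β lam z a) = 1 := by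
  have hQ := (Qpart_pos r c w1 w2 β lam z).ne'
  rw [show (∑ a, gibbs r c w1 w2 β lam z a)
      = (∑ a, Real.exp (qfun r c w1 w2 lam z a / β)) / Qpart r c w1 w2 β lam z by
    rw [Finset.sum_div]; exact Finset.sum_congr rfl fun a _ => rfl]
  rw [← Qpart]
  exact div_self hQ

lemma hasDerivAt_mean (hβ : β ≠ 0) (lam : ℝ) (z : Z) :
    HasDerivAt (fun l => E1f r c w1 w2 β l z / Qpart r c w1 w2 β l z)
      ((E1f r c w1 w2 β lam z ^ 2 - E2f r c w1 w2 β lam z * Qpart r c w1 w2 β lam z)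
        / (β * Qpart r c w1 w2 β lam z ^ 2)) lam := by
  have h := (hasDerivAt_E1f r c w1 w2 β hβ lam z).div
    (hasDerivAt_Qpart r c w1 w2 β hβ lam z) (Qpart_pos r c w1 w2 β lam z).ne'
  refine h.congr_deriv ?_
  have hQ := (Qpart_pos r c w1 w2 β lam z).ne'
  field_simp
  ring

lemma hasDerivAt_logQ (hβ : β ≠ 0) (lam : ℝ) (z : Z) :
    HasDerivAt (fun l => Real.log (Qpart r c w1 w2 β l z))
      (-(E1f r c w1 w2 β lam z / Qpart r c w1 w2 β lam z) / β) lam := by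
  have h := (hasDerivAt_Qpart r c w1 w2 β hβ lam z).log (Qpart_pos r c w1 w2 β lam z).ne'
  convert h using 1
  ring

end racer_aux

section racer_bounds
variable {Z : Type*} (r c : Z → Bool → ℝ) (w1 w2 : Z → ℝ) (β M K : ℝ)

lemma E1f_nonneg (hw2 : ∀ z, 0 ≤ w2 z) (hc : ∀ z a, 0 ≤ c z a) (lam : ℝ) (z : Z) :
    0 ≤ E1f r c w1 w2 β lam z :=
  Finset.sum_nonneg fun a _ => mul_nonneg (Real.exp_pos _).le (mul_nonneg (hw2 z) (hc z a))

lemma E1f_le (hw2 : ∀ z, 0 ≤ w2 z) (hcM : ∀ z a, c z a ≤ M) (hcnn : ∀ z a, 0 ≤ c z a)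
    (hw2K : ∀ z, w2 z ≤ K) (hK : 0 ≤ K) (lam : ℝ) (z : Z) :
    E1f r c w1 w2 β lam z ≤ M * K * Qpart r c w1 w2 β lam z := by
  rw [Qpart, Finset.mul_sum]
  apply Finset.sum_le_sum
  intro a _
  have hv : w2 z * c z a ≤ M * K := by
    calc w2 z * c z a ≤ K * M := mul_le_mul (hw2K z) (hcM z a) (hcnn z a) hK
      _ = M * K := by ring
  nlinarith [Real.exp_pos (qfun r c w1 w2 lam z a / β)]

lemma E2f_le (hw2 : ∀ z, 0 ≤ w2 z) (hcM : ∀ z a, c z a ≤ M) (hcnn : ∀ z a, 0 ≤ c z a)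
    (hw2K : ∀ z, w2 z ≤ K) (hK : 0 ≤ K) (lam : ℝ) (z : Z) :
    E2f r c w1 w2 β lam z ≤ (M * K) ^ 2 * Qpart r c w1 w2 β lam z := by
  rw [Qpart, Finset.mul_sum]
  apply Finset.sum_le_sum
  intro a _
  have hvn : 0 ≤ w2 z * c z a := mul_nonneg (hw2 z) (hcnn z a)
  have hv : w2 z * c z a ≤ M * K := by
    calc w2 z * c z a ≤ K * M := mul_le_mul (hw2K z) (hcM z a) (hcnn z a) hK
      _ = M * K := by ring
  have hv2 : (w2 z * c z a) ^ 2 ≤ (M * K) ^ 2 := by nlinarith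
  nlinarith [Real.exp_pos (qfun r c w1 w2 lam z a / β), hv2]

lemma E1f_sq_le (lam : ℝ) (z : Z) :
    E1f r c w1 w2 β lam z ^ 2 ≤ Qpart r c w1 w2 β lam z * E2f r c w1 w2 β lam z := by
  rw [E1f, Qpart, E2f]
  apply Finset.sum_sq_le_sum_mul_sum_of_sq_eq_mul
  · exact fun a _ => (Real.exp_pos _).le
  · exact fun a _ => mul_nonneg (Real.exp_pos _).le (sq_nonneg _)
  · intro a _; ring

/-- The KL divergence between two Gibbs policies is the Bregman divergence of `log Q`. -/
lemma klBool_gibbs_eq (hβ : (0:ℝ) < β) (lam mu : ℝ) (z : Z) :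
    klBool (gibbs r c w1 w2 β lam z) (gibbs r c w1 w2 β mu z)
      = Real.log (Qpart r c w1 w2 β mu z) - Real.log (Qpart r c w1 w2 β lam z)
        + (mu - lam) * (E1f r c w1 w2 β lam z / Qpart r c w1 w2 β lam z) / β := by
  have hQl := (Qpart_pos r c w1 w2 β lam z)
  have hQm := (Qpart_pos r c w1 w2 β mu z)
  have hterm : ∀ a : Bool, Real.log (gibbs r c w1 w2 β lam z a / gibbs r c w1 w2 β mu z a)
      = (mu - lam) * (w2 z * c z a) / β
        + (Real.log (Qpart r c w1 w2 β mu z) - Real.log (Qpart r c w1 w2 β lam z)) := by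
    intro a
    have h1 : (0:ℝ) < gibbs r c w1 w2 β lam z a := div_pos (Real.exp_pos _) hQl
    have h2 : (0:ℝ) < gibbs r c w1 w2 β mu z a := div_pos (Real.exp_pos _) hQm
    rw [Real.log_div h1.ne' h2.ne', gibbs, gibbs,
      Real.log_div (Real.exp_pos _).ne' hQl.ne', Real.log_div (Real.exp_pos _).ne' hQm.ne',
      Real.log_exp, Real.log_exp, qfun, qfun]
    ring
  rw [klBool]
  calc (∑ a, gibbs r c w1 w2 β lam z a
        * Real.log (gibbs r c w1 w2 β lam z a / gibbs r c w1 w2 β mu z a))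
      = ∑ a, ((mu - lam) / β * (gibbs r c w1 w2 β lam z a * (w2 z * c z a))
          + (Real.log (Qpart r c w1 w2 β mu z) - Real.log (Qpart r c w1 w2 β lam z))
            * gibbs r c w1 w2 β lam z a) := by
        refine Finset.sum_congr rfl fun a _ => ?_
        rw [hterm a]; ring
    _ = (mu - lam) / β * (∑ a, gibbs r c w1 w2 β lam z a * (w2 z * c z a))
          + (Real.log (Qpart r c w1 w2 β mu z) - Real.log (Qpart r c w1 w2 β lam z))
            * (∑ a, gibbs r c w1 w2 β lam z a) := by
        rw [Finset.sum_add_distrib, Finset.mul_sum, Finset.mul_sum]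
    _ = Real.log (Qpart r c w1 w2 β mu z) - Real.log (Qpart r c w1 w2 β lam z)
        + (mu - lam) * (E1f r c w1 w2 β lam z / Qpart r c w1 w2 β lam z) / β := by
        rw [gibbs_sum_one, gibbs_mean_eq]; ring

/-- Per-`z` KL bound via the Bregman/Taylor estimate. -/
lemma klBool_gibbs_le (hβ : (0:ℝ) < β) (hM : 0 < M) (hK : 0 < K)
    (hw2 : ∀ z, 0 ≤ w2 z) (hcM : ∀ z a, c z a ≤ M) (hcnn : ∀ z a, 0 ≤ c z a)
    (hw2K : ∀ z, w2 z ≤ K) (lam mu : ℝ) (z : Z) :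
    klBool (gibbs r c w1 w2 β lam z) (gibbs r c w1 w2 β mu z)
      ≤ M ^ 2 * K ^ 2 / β ^ 2 / 2 * (mu - lam) ^ 2 := by
  set S : ℝ := M ^ 2 * K ^ 2 / β ^ 2 with hSdef
  have hS : 0 ≤ S := by positivity
  set f : ℝ → ℝ := fun l => Real.log (Qpart r c w1 w2 β l z) with hfdef
  set f' : ℝ → ℝ := fun l => -(E1f r c w1 w2 β l z / Qpart r c w1 w2 β l z) / β with hf'def
  have hf : ∀ x, HasDerivAt f (f' x) x := fun x =>
    hasDerivAt_logQ r c w1 w2 β hβ.ne' x z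
  have hf' : ∀ x, HasDerivAt f'
      (-((E1f r c w1 w2 β x z ^ 2 - E2f r c w1 w2 β x z * Qpart r c w1 w2 β x z)
          / (β * Qpart r c w1 w2 β x z ^ 2)) / β) x := fun x =>
    ((hasDerivAt_mean r c w1 w2 β hβ.ne' x z).neg).div_const β
  have hbound : ∀ x, |(-((E1f r c w1 w2 β x z ^ 2 - E2f r c w1 w2 β x z * Qpart r c w1 w2 β x z)
          / (β * Qpart r c w1 w2 β x z ^ 2)) / β)| ≤ S := by
    intro x
    have hQ := Qpart_pos r c w1 w2 β x z
    have hD1 : 0 ≤ E2f r c w1 w2 β x z * Qpart r c w1 w2 β x z - E1f r c w1 w2 β x z ^ 2 := by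
      have := E1f_sq_le r c w1 w2 β x z
      nlinarith
    have hD2 : E2f r c w1 w2 β x z * Qpart r c w1 w2 β x z - E1f r c w1 w2 β x z ^ 2
        ≤ M ^ 2 * K ^ 2 * Qpart r c w1 w2 β x z ^ 2 := by
      have h2 := E2f_le r c w1 w2 β M K hw2 hcM hcnn hw2K hK.le x z
      nlinarith [sq_nonneg (E1f r c w1 w2 β x z)]
    have heq : (-((E1f r c w1 w2 β x z ^ 2 - E2f r c w1 w2 β x z * Qpart r c w1 w2 β x z)
          / (β * Qpart r c w1 w2 β x z ^ 2)) / β)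
        = (E2f r c w1 w2 β x z * Qpart r c w1 w2 β x z - E1f r c w1 w2 β x z ^ 2)
            / (β ^ 2 * Qpart r c w1 w2 β x z ^ 2) := by
      rw [← neg_div, neg_sub, div_div,
        show β * Qpart r c w1 w2 β x z ^ 2 * β = β ^ 2 * Qpart r c w1 w2 β x z ^ 2 by ring]
    rw [heq, abs_of_nonneg (by positivity)]
    rw [hSdef, div_le_div_iff₀ (by positivity) (by positivity)]
    nlinarith [sq_nonneg (Qpart r c w1 w2 β x z), hD2, sq_nonneg β]
  have hlip : ∀ u v : ℝ, |f' v - f' u| ≤ S * |v - u| :=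
    fun u v => abs_sub_le_of_derivBound hf' hbound u v
  have hq := quad_upper hf hS hlip lam mu
  have hkl := klBool_gibbs_eq r c w1 w2 β hβ lam mu z
  rw [hkl]
  have : f mu - f lam - f' lam * (mu - lam)
      = Real.log (Qpart r c w1 w2 β mu z) - Real.log (Qpart r c w1 w2 β lam z)
        + (mu - lam) * (E1f r c w1 w2 β lam z / Qpart r c w1 w2 β lam z) / β := by
    simp only [hfdef, hf'def]; ring
  rw [← this]
  calc f mu - f lam - f' lam * (mu - lam) ≤ S / 2 * (mu - lam) ^ 2 := hq
    _ = M ^ 2 * K ^ 2 / β ^ 2 / 2 * (mu - lam) ^ 2 := by rw [hSdef]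

end racer_bounds

/-- Arithmetic contraction factor estimate. -/
lemma contraction_factor {A β s : ℝ} (hβ : 0 < β) (hA : 0 < A)
    (hs1 : β ≤ s) (hs2 : s ≤ β + A / β) :
    |1 - 2 * β / (A + 2 * β ^ 2) * s| ≤ A / (A + 2 * β ^ 2) := by
  have hD : (0:ℝ) < A + 2 * β ^ 2 := by positivity
  have h2 : β * s ≤ β ^ 2 + A := by
    have h := mul_le_mul_of_nonneg_left hs2 hβ.le
    calc β * s ≤ β * (β + A / β) := h
      _ = β ^ 2 + A := by field_simp
  have h1 : β ^ 2 ≤ β * s := by nlinarith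
  have hrw : 1 - 2 * β / (A + 2 * β ^ 2) * s
      = (A + 2 * β ^ 2 - 2 * (β * s)) / (A + 2 * β ^ 2) := by
    field_simp
  rw [hrw, abs_le, ← neg_div, div_le_div_iff_of_pos_right hD, div_le_div_iff_of_pos_right hD]
  constructor <;> linarith

/-- linear convergence of RACER: if `λ*` is the unique
minimizer of the dual function `d` over `[0,∞)`, `π* = π_{λ*}`, and the
primal–dual iterates are `λ_{t+1} = max(0, λ_t + η (∑_z ρ(z) ∑_a π_{λ_t}(a|z)
w2(z) c(z,a) − C − β λ_t))` with `η = 2β/(M²K² + 2β²)` and `π_t = π_{λ_t}`,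
then `∑_z ρ(z) KL(π_t(·|z) ‖ π*(·|z)) ≤ (M²K²/(2β²)) ·
(M²K²/(M²K² + 2β²))^{2t} · (λ₀ − λ*)²`. -/
theorem racer_linear_convergence {Z : Type*} [Fintype Z] [Nonempty Z]
    (ρ : Z → ℝ) (hρ_pos : ∀ z, 0 < ρ z) (hρ_sum : ∑ z, ρ z = 1)
    (r c : Z → Bool → ℝ) (w1 w2 : Z → ℝ)
    (hw1 : ∀ z, 0 ≤ w1 z) (hw2 : ∀ z, 0 ≤ w2 z)
    (β : ℝ) (hβ : 0 < β) (C : ℝ)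
    (M K : ℝ) (hM : 0 < M) (hK : 0 < K)
    (hc_bound : ∀ z a, 0 ≤ c z a ∧ c z a ≤ M)
    (hw2_bound : ∀ z, w2 z ≤ K)
    (lamstar : ℝ) (hlamstar_mem : lamstar ∈ Set.Ici (0 : ℝ))
    (hlamstar_min : ∀ lam ∈ Set.Ici (0 : ℝ),
      dualFun ρ r c w1 w2 β C lamstar ≤ dualFun ρ r c w1 w2 β C lam)
    (hlamstar_unique : ∀ lam' ∈ Set.Ici (0 : ℝ),
      (∀ lam ∈ Set.Ici (0 : ℝ),
        dualFun ρ r c w1 w2 β C lam' ≤ dualFun ρ r c w1 w2 β C lam) →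
      lam' = lamstar)
    (lamseq : ℕ → ℝ) (hlam0 : 0 ≤ lamseq 0)
    (hstep : ∀ t : ℕ, lamseq (t + 1)
      = max 0 (lamseq t + 2 * β / (M ^ 2 * K ^ 2 + 2 * β ^ 2) *
          ((∑ z, ρ z * ∑ a, gibbs r c w1 w2 β (lamseq t) z a * (w2 z * c z a))
            - C - β * lamseq t))) :
    ∀ t : ℕ,
      ∑ z, ρ z * klBool (gibbs r c w1 w2 β (lamseq t) z)
          (gibbs r c w1 w2 β lamstar z)
        ≤ M ^ 2 * K ^ 2 / (2 * β ^ 2)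
          * (M ^ 2 * K ^ 2 / (M ^ 2 * K ^ 2 + 2 * β ^ 2)) ^ (2 * t)
          * (lamseq 0 - lamstar) ^ 2 := by
  have hβ' : β ≠ 0 := hβ.ne'
  have hcnn : ∀ z a, 0 ≤ c z a := fun z a => (hc_bound z a).1
  have hcM : ∀ z a, c z a ≤ M := fun z a => (hc_bound z a).2
  have hA0 : (0:ℝ) < M ^ 2 * K ^ 2 := by positivity
  have hD0 : (0:ℝ) < M ^ 2 * K ^ 2 + 2 * β ^ 2 := by positivity
  set A : ℝ := M ^ 2 * K ^ 2 with hAdef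
  set η : ℝ := 2 * β / (A + 2 * β ^ 2) with hηdef
  set q : ℝ := A / (A + 2 * β ^ 2) with hqdef
  have hq0 : 0 ≤ q := by positivity
  have hη0 : 0 ≤ η := by positivity
  set Gm : ℝ → ℝ :=
    fun l => ∑ z, ρ z * (E1f r c w1 w2 β l z / Qpart r c w1 w2 β l z) with hGmdef
  set φ : ℝ → ℝ := fun l => C + β * l - Gm l with hφdef
  set φ' : ℝ → ℝ := fun l => β - ∑ z, ρ z *
      ((E1f r c w1 w2 β l z ^ 2 - E2f r c w1 w2 β l z * Qpart r c w1 w2 β l z)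
        / (β * Qpart r c w1 w2 β l z ^ 2)) with hφ'def
  -- derivative of φ's antiderivative pieces
  have hφd : ∀ x : ℝ, HasDerivAt φ (φ' x) x := by
    intro x
    have hG : HasDerivAt Gm (∑ z, ρ z *
        ((E1f r c w1 w2 β x z ^ 2 - E2f r c w1 w2 β x z * Qpart r c w1 w2 β x z)
          / (β * Qpart r c w1 w2 β x z ^ 2))) x :=
      HasDerivAt.fun_sum fun z _ => (hasDerivAt_mean r c w1 w2 β hβ' x z).const_mul (ρ z)
    have hlin : HasDerivAt (fun l : ℝ => C + β * l) β x := by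
      simpa using ((hasDerivAt_id x).const_mul β).const_add C
    exact hlin.sub hG
  -- bounds on the variance-type ratio
  have hvarr : ∀ (x : ℝ) (z : Z),
      -(A / β) ≤ (E1f r c w1 w2 β x z ^ 2 - E2f r c w1 w2 β x z * Qpart r c w1 w2 β x z)
          / (β * Qpart r c w1 w2 β x z ^ 2)
        ∧ (E1f r c w1 w2 β x z ^ 2 - E2f r c w1 w2 β x z * Qpart r c w1 w2 β x z)
          / (β * Qpart r c w1 w2 β x z ^ 2) ≤ 0 := by
    intro x z
    have hQ := Qpart_pos r c w1 w2 β x z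
    have hE2 := E2f_le r c w1 w2 β M K hw2 hcM hcnn hw2_bound hK.le x z
    have hCS := E1f_sq_le r c w1 w2 β x z
    have hMK : (M * K) ^ 2 = A := by rw [hAdef]; ring
    rw [hMK] at hE2
    constructor
    · rw [le_div_iff₀ (by positivity : (0:ℝ) < β * Qpart r c w1 w2 β x z ^ 2)]
      have hrw : -(A / β) * (β * Qpart r c w1 w2 β x z ^ 2)
          = -(A * Qpart r c w1 w2 β x z ^ 2) := by field_simp
      rw [hrw]
      nlinarith [sq_nonneg (E1f r c w1 w2 β x z), hQ]
    · apply div_nonpos_of_nonpos_of_nonneg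
      · linarith
      · positivity
  have hφ'b : ∀ x : ℝ, β ≤ φ' x ∧ φ' x ≤ β + A / β := by
    intro x
    have hub : (∑ z, ρ z *
        ((E1f r c w1 w2 β x z ^ 2 - E2f r c w1 w2 β x z * Qpart r c w1 w2 β x z)
          / (β * Qpart r c w1 w2 β x z ^ 2))) ≤ 0 :=
      Finset.sum_nonpos fun z _ =>
        mul_nonpos_of_nonneg_of_nonpos (hρ_pos z).le (hvarr x z).2
    have hlb : -(A / β) ≤ (∑ z, ρ z *
        ((E1f r c w1 w2 β x z ^ 2 - E2f r c w1 w2 β x z * Qpart r c w1 w2 β x z)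
          / (β * Qpart r c w1 w2 β x z ^ 2))) := by
      have h1 : (∑ z, ρ z * (-(A / β)))
          ≤ ∑ z, ρ z *
            ((E1f r c w1 w2 β x z ^ 2 - E2f r c w1 w2 β x z * Qpart r c w1 w2 β x z)
              / (β * Qpart r c w1 w2 β x z ^ 2)) :=
        Finset.sum_le_sum fun z _ =>
          mul_le_mul_of_nonneg_left (hvarr x z).1 (hρ_pos z).le
      calc -(A / β) = ∑ z, ρ z * (-(A / β)) := by
            rw [← Finset.sum_mul, hρ_sum, one_mul]
        _ ≤ _ := h1
    constructor
    · simp only [hφ'def]; linarith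
    · simp only [hφ'def]; linarith
  -- derivative of the dual function
  have hduald : ∀ x : ℝ, HasDerivAt (dualFun ρ r c w1 w2 β C) (φ x) x := by
    intro x
    have h1 : HasDerivAt (fun l : ℝ => ∑ z, ρ z * Real.log (Qpart r c w1 w2 β l z))
        (∑ z, ρ z * (-(E1f r c w1 w2 β x z / Qpart r c w1 w2 β x z) / β)) x :=
      HasDerivAt.fun_sum fun z _ => (hasDerivAt_logQ r c w1 w2 β hβ' x z).const_mul (ρ z)
    have h2 := h1.const_mul β
    have h3 : HasDerivAt (fun l : ℝ => l * C) C x := hasDerivAt_mul_const C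
    have h4 : HasDerivAt (fun l : ℝ => β * l ^ 2 / 2) (β * x) x := by
      have h := ((hasDerivAt_pow 2 x).const_mul β).div_const 2
      refine h.congr_deriv ?_
      ring
    have htot := (h2.add h3).add h4
    have hsum_eq : β * (∑ z, ρ z * (-(E1f r c w1 w2 β x z / Qpart r c w1 w2 β x z) / β))
        = -Gm x := by
      rw [hGmdef, Finset.mul_sum, ← Finset.sum_neg_distrib]
      refine Finset.sum_congr rfl fun z _ => ?_
      rw [mul_comm β, mul_assoc, div_mul_cancel₀ _ hβ']
      ring
    have hshow : HasDerivAt (fun l : ℝ =>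
        β * ∑ z, ρ z * Real.log (Qpart r c w1 w2 β l z) + l * C + β * l ^ 2 / 2)
        (φ x) x := by
      refine htot.congr_deriv ?_
      rw [hsum_eq]
      simp only [hφdef]
      ring
    exact hshow
  -- fixed point property of lamstar
  have hfix : max 0 (lamstar - η * φ lamstar) = lamstar := by
    rcases eq_or_lt_of_le (Set.mem_Ici.mp hlamstar_mem : (0:ℝ) ≤ lamstar) with h0 | hpos
    · have hφ0 : 0 ≤ φ lamstar := by
        have hder := hduald lamstar
        rw [hasDerivAt_iff_tendsto_slope] at hder
        have hmono : nhdsWithin lamstar (Set.Ioi lamstar) ≤ nhdsWithin lamstar {lamstar}ᶜ :=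
          nhdsWithin_mono _ (fun x hx => ne_of_gt hx)
        refine ge_of_tendsto (hder.mono_left hmono) ?_
        filter_upwards [self_mem_nhdsWithin] with x hx
        have hx0 : lamstar < x := hx
        have hfx : dualFun ρ r c w1 w2 β C lamstar ≤ dualFun ρ r c w1 w2 β C x :=
          hlamstar_min x (le_trans hlamstar_mem hx0.le)
        rw [slope_def_field]
        apply div_nonneg (by linarith) (by linarith)
      have hle : lamstar - η * φ lamstar ≤ 0 := by
        linarith [mul_nonneg hη0 hφ0]
      rw [max_eq_left hle, h0]
    · have hloc : IsLocalMin (dualFun ρ r c w1 w2 β C) lamstar := by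
        have hmin : IsMinOn (dualFun ρ r c w1 w2 β C) (Set.Ici 0) lamstar := by
          intro x hx
          exact hlamstar_min x hx
        exact hmin.isLocalMin (Ici_mem_nhds hpos)
      have hz : φ lamstar = 0 := hloc.hasDerivAt_eq_zero (hduald lamstar)
      rw [hz]
      simp only [mul_zero, sub_zero]
      exact max_eq_right hlamstar_mem
  -- contraction of the gradient map
  have hcontr : ∀ x y : ℝ, |(x - η * φ x) - (y - η * φ y)| ≤ q * |x - y| := by
    have key : ∀ x y : ℝ, x < y → |(x - η * φ x) - (y - η * φ y)| ≤ q * |x - y| := by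
      intro x y hxy
      obtain ⟨ξ, _, hξ⟩ := exists_hasDerivAt_eq_slope φ φ' hxy
        (fun u _ => (hφd u).continuousAt.continuousWithinAt) (fun u _ => hφd u)
      have hne : y - x ≠ 0 := by linarith
      have hslope : φ y - φ x = φ' ξ * (y - x) := by
        field_simp at hξ
        linarith [hξ]
      have hrw : (x - η * φ x) - (y - η * φ y) = -((1 - η * φ' ξ) * (y - x)) := by
        have : φ y = φ x + φ' ξ * (y - x) := by linarith
        rw [this]; ring
      rw [hrw, abs_neg, abs_mul]
      have hfac : |1 - η * φ' ξ| ≤ q := by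
        rw [hηdef, hqdef]
        exact contraction_factor hβ hA0 (hφ'b ξ).1 (hφ'b ξ).2
      rw [abs_sub_comm x y]
      exact mul_le_mul_of_nonneg_right hfac (abs_nonneg _)
    intro x y
    rcases lt_trichotomy x y with h | h | h
    · exact key x y h
    · simp [h]
    · rw [abs_sub_comm, abs_sub_comm x y]
      exact key y x h
  -- the iteration in gradient form
  have hiter : ∀ t : ℕ, lamseq (t + 1) = max 0 (lamseq t - η * φ (lamseq t)) := by
    intro t
    rw [hstep t]
    congr 1
    have hmean : (∑ z, ρ z * ∑ a, gibbs r c w1 w2 β (lamseq t) z a * (w2 z * c z a))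
        = Gm (lamseq t) := by
      rw [hGmdef]
      exact Finset.sum_congr rfl fun z _ => by rw [gibbs_mean_eq]
    rw [hmean]
    simp only [hφdef, hηdef, hAdef]
    ring
  -- linear convergence of the multipliers
  have hdist : ∀ t : ℕ, |lamseq t - lamstar| ≤ q ^ t * |lamseq 0 - lamstar| := by
    intro t
    induction t with
    | zero => simp
    | succ n ih =>
      rw [hiter n]
      have hfix' : max (lamstar - η * φ lamstar) 0 = lamstar := by
        rw [max_comm]; exact hfix
      calc |max 0 (lamseq n - η * φ (lamseq n)) - lamstar|
          = |max (lamseq n - η * φ (lamseq n)) 0 - max (lamstar - η * φ lamstar) 0| := by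
            conv_lhs => rw [max_comm 0 (lamseq n - η * φ (lamseq n)), ← hfix']
        _ ≤ |(lamseq n - η * φ (lamseq n)) - (lamstar - η * φ lamstar)| :=
            abs_max_sub_max_le_abs _ _ _
        _ ≤ q * |lamseq n - lamstar| := hcontr _ _
        _ ≤ q * (q ^ n * |lamseq 0 - lamstar|) := by
            exact mul_le_mul_of_nonneg_left ih hq0
        _ = q ^ (n + 1) * |lamseq 0 - lamstar| := by ring
  -- final KL estimate
  intro t
  have hklz : ∀ z, klBool (gibbs r c w1 w2 β (lamseq t) z) (gibbs r c w1 w2 β lamstar z)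
      ≤ A / β ^ 2 / 2 * (lamstar - lamseq t) ^ 2 := by
    intro z
    have h := klBool_gibbs_le r c w1 w2 β M K hβ hM hK hw2 hcM hcnn hw2_bound
      (lamseq t) lamstar z
    calc klBool (gibbs r c w1 w2 β (lamseq t) z) (gibbs r c w1 w2 β lamstar z)
        ≤ M ^ 2 * K ^ 2 / β ^ 2 / 2 * (lamstar - lamseq t) ^ 2 := h
      _ = A / β ^ 2 / 2 * (lamstar - lamseq t) ^ 2 := by rw [hAdef]
  calc ∑ z, ρ z * klBool (gibbs r c w1 w2 β (lamseq t) z) (gibbs r c w1 w2 β lamstar z)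
      ≤ ∑ z, ρ z * (A / β ^ 2 / 2 * (lamstar - lamseq t) ^ 2) :=
        Finset.sum_le_sum fun z _ => mul_le_mul_of_nonneg_left (hklz z) (hρ_pos z).le
    _ = A / β ^ 2 / 2 * (lamstar - lamseq t) ^ 2 := by
        rw [← Finset.sum_mul, hρ_sum, one_mul]
    _ ≤ A / β ^ 2 / 2 * (q ^ t * |lamseq 0 - lamstar|) ^ 2 := by
        have h1 : (lamstar - lamseq t) ^ 2 ≤ (q ^ t * |lamseq 0 - lamstar|) ^ 2 := by
          have h2 : |lamstar - lamseq t| ≤ q ^ t * |lamseq 0 - lamstar| := by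
            rw [abs_sub_comm]; exact hdist t
          calc (lamstar - lamseq t) ^ 2 = |lamstar - lamseq t| ^ 2 := (sq_abs _).symm
            _ ≤ (q ^ t * |lamseq 0 - lamstar|) ^ 2 := by
                apply pow_le_pow_left₀ (abs_nonneg _) h2
        exact mul_le_mul_of_nonneg_left h1 (by positivity)
    _ = A / (2 * β ^ 2) * q ^ (2 * t) * (lamseq 0 - lamstar) ^ 2 := by
        rw [mul_pow, ← pow_mul, sq_abs]
        ring
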